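/- For all regular trees 𝔸, 𝔹 ∈ 𝔗: 𝔸 ≤T 𝔹 if and only if ⟨𝔸⟩ ≤∅ ⟨𝔹⟩, where ⟨·⟩ is the translation into n-ary-union trees and ≤∅ is the subtyping relation up-to the empty relation. -/

import Mathlib

set_option maxHeartbeats 1000000

namespace CAPPaper

/- ## μ-types: datatype variables `var true v`, type variables `var false v`,
   type constants `const c` (with `const 0` also playing the role of junk/∘),
   type application `app`, function types `arrow`, unions `union`,
   recursive types `mu`. -/

inductive MuTy : Type
  | var : Bool → ℕ → MuTy
  | const : ℕ → MuTy
  | app : MuTy → MuTy → MuTy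
  | arrow : MuTy → MuTy → MuTy
  | union : MuTy → MuTy → MuTy
  | mu : Bool → ℕ → MuTy → MuTy

namespace MuTy

/-- Naive substitution of `T` for the variable `(b, v)`; binders shadow. -/
def subst (b : Bool) (v : ℕ) (T : MuTy) : MuTy → MuTy
  | var b' v' => if b' = b ∧ v' = v then T else var b' v'
  | const c => const c
  | app A B => app (subst b v T A) (subst b v T B)
  | arrow A B => arrow (subst b v T A) (subst b v T B)
  | union A B => union (subst b v T A) (subst b v T B)
  | mu b' v' A => if b' = b ∧ v' = v then mu b' v' A else mu b' v' (subst b v T A)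

/-- The variable `(b, v)` occurs free. -/
def FreeIn (b : Bool) (v : ℕ) : MuTy → Prop
  | var b' v' => b' = b ∧ v' = v
  | const _ => False
  | app A B => FreeIn b v A ∨ FreeIn b v B
  | arrow A B => FreeIn b v A ∨ FreeIn b v B
  | union A B => FreeIn b v A ∨ FreeIn b v B
  | mu b' v' A => ¬(b' = b ∧ v' = v) ∧ FreeIn b v A

/-- The variable `(b, v)` occurs only under `⊃` or `@`. -/
def Guarded (b : Bool) (v : ℕ) : MuTy → Prop
  | var b' v' => ¬(b' = b ∧ v' = v)
  | const _ => True
  | app _ _ => True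
  | arrow _ _ => True
  | union A B => Guarded b v A ∧ Guarded b v B
  | mu b' v' A => (b' = b ∧ v' = v) ∨ Guarded b v A

/-- Contractive μ-types. -/
def Contr : MuTy → Prop
  | var _ _ => True
  | const _ => True
  | app A B => Contr A ∧ Contr B
  | arrow A B => Contr A ∧ Contr B
  | union A B => Contr A ∧ Contr B
  | mu b v A => Guarded b v A ∧ Contr A

/-- μ-datatypes. -/
inductive IsData : MuTy → Prop
  | var (v : ℕ) : IsData (var true v)
  | const (c : ℕ) : IsData (const c)
  | app {D : MuTy} (A : MuTy) : IsData D → IsData (app D A)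
  | union {D D' : MuTy} : IsData D → IsData D' → IsData (union D D')
  | mu {v : ℕ} {D : MuTy} : IsData D → IsData (mu true v D)

def IsMu : MuTy → Prop
  | mu _ _ _ => True
  | _ => False

def IsUnion : MuTy → Prop
  | union _ _ => True
  | _ => False

def IsAtom : MuTy → Prop
  | var _ _ => True
  | const _ => True
  | _ => False

/-- The non-union components of a maximal union, in left-to-right order. -/
def comps : MuTy → List MuTy
  | union A B => comps A ++ comps B
  | A => [A]

/-- Replace the `i`-th (left-to-right) non-union component of a maximal union. -/
def replaceComp : MuTy → ℕ → MuTy → MuTy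
  | union A B, i, N =>
      if i < (comps A).length then union (replaceComp A i N) B
      else union A (replaceComp B (i - (comps A).length) N)
  | A, i, N => if i = 0 then N else A

end MuTy

/- ## Type equivalence `≈μ` -/

inductive EqMu : MuTy → MuTy → Prop
  | refl (A : MuTy) : EqMu A A
  | symm {A B : MuTy} : EqMu A B → EqMu B A
  | trans {A B C : MuTy} : EqMu A B → EqMu B C → EqMu A C
  | app {D D' A A' : MuTy} : EqMu D D' → EqMu A A' → EqMu (.app D A) (.app D' A')
  | arrow {A A' B B' : MuTy} : EqMu A A' → EqMu B B' → EqMu (.arrow A B) (.arrow A' B')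
  | union {A A' B B' : MuTy} : EqMu A A' → EqMu B B' → EqMu (.union A B) (.union A' B')
  | mu {A B : MuTy} (b : Bool) (v : ℕ) : EqMu A B → EqMu (.mu b v A) (.mu b v B)
  | idem (A : MuTy) : EqMu (.union A A) A
  | comm (A B : MuTy) : EqMu (.union A B) (.union B A)
  | assoc (A B C : MuTy) : EqMu (.union A (.union B C)) (.union (.union A B) C)
  | fold (b : Bool) (v : ℕ) (A : MuTy) : EqMu (.mu b v A) (MuTy.subst b v (.mu b v A) A)
  | contract {A B : MuTy} {b : Bool} {v : ℕ} :
      EqMu A (MuTy.subst b v A B) → MuTy.Contr (.mu b v B) → EqMu A (.mu b v B)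

/- ## Subtyping `Σ ⊢ A ≤μ B` -/

inductive SubMu : Set ((Bool × ℕ) × (Bool × ℕ)) → MuTy → MuTy → Prop
  | refl (SS) (A : MuTy) : SubMu SS A A
  | hyp {SS} {V W : Bool × ℕ} : (V, W) ∈ SS → SubMu SS (.var V.1 V.2) (.var W.1 W.2)
  | eq {A B : MuTy} (SS) : EqMu A B → SubMu SS A B
  | trans {SS} {A B C : MuTy} : SubMu SS A B → SubMu SS B C → SubMu SS A C
  | app {SS} {D D' A A' : MuTy} : SubMu SS D D' → SubMu SS A A' →
      SubMu SS (.app D A) (.app D' A')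
  | arrow {SS} {A A' B B' : MuTy} : SubMu SS A A' → SubMu SS B B' →
      SubMu SS (.arrow A' B) (.arrow A B')
  | unionL {SS} {A B C : MuTy} : SubMu SS A C → SubMu SS B C → SubMu SS (.union A B) C
  | unionR1 {SS} {A B C : MuTy} : SubMu SS A B → SubMu SS A (.union B C)
  | unionR2 {SS} {A B C : MuTy} : SubMu SS A C → SubMu SS A (.union B C)
  | mu {SS} {V W : Bool × ℕ} {A B : MuTy} :
      SubMu (insert (V, W) SS) A B →
      ¬ MuTy.FreeIn W.1 W.2 A → ¬ MuTy.FreeIn V.1 V.2 B →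
      SubMu SS (.mu V.1 V.2 A) (.mu W.1 W.2 B)

/-- `A ≤μ B` (empty set of hypotheses). -/
def Sub (A B : MuTy) : Prop := SubMu ∅ A B

/- ## Coinductive equivalence `≈⃗μ` and subtyping `≤⃗μ` on μ-types,
   given via their generating functions and greatest fixed points. -/

/-- One-step unfolding of the rules for `≈⃗μ`. -/
def EqVecStep (R : MuTy → MuTy → Prop) (A B : MuTy) : Prop :=
  (MuTy.IsAtom A ∧ A = B)
  ∨ (∃ D A' D' B', A = .app D A' ∧ B = .app D' B' ∧ R D D' ∧ R A' B')
  ∨ (∃ A1 A2 B1 B2, A = .arrow A1 A2 ∧ B = .arrow B1 B2 ∧ R A1 B1 ∧ R A2 B2)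
  ∨ (∃ i b v C, (∀ X ∈ A.comps.take i, ¬ X.IsMu) ∧ A.comps[i]? = some (.mu b v C) ∧
      R (A.replaceComp i (MuTy.subst b v (.mu b v C) C)) B)
  ∨ ((∀ X ∈ A.comps, ¬ X.IsMu) ∧
      ∃ j b w C, (∀ Y ∈ B.comps.take j, ¬ Y.IsMu) ∧ B.comps[j]? = some (.mu b w C) ∧
      R A (B.replaceComp j (MuTy.subst b w (.mu b w C) C)))
  ∨ ((A.IsUnion ∨ B.IsUnion) ∧ (∀ X ∈ A.comps, ¬ X.IsMu) ∧ (∀ Y ∈ B.comps, ¬ Y.IsMu) ∧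
      (∀ X ∈ A.comps, ∃ Y ∈ B.comps, R X Y) ∧ (∀ Y ∈ B.comps, ∃ X ∈ A.comps, R X Y))

/-- The generating function `Φ≈⃗μ`. -/
def PhiEqVec (X : Set (MuTy × MuTy)) : Set (MuTy × MuTy) :=
  {p | EqVecStep (fun a b => (a, b) ∈ X) p.1 p.2}

/-- `A ≈⃗μ B`: the greatest fixed point of `Φ≈⃗μ`. -/
def EqVec (A B : MuTy) : Prop :=
  ∃ R : MuTy → MuTy → Prop, (∀ x y, R x y → EqVecStep R x y) ∧ R A B

/-- One-step unfolding of the rules for `≤⃗μ`. -/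
def SubVecStep (R : MuTy → MuTy → Prop) (A B : MuTy) : Prop :=
  (MuTy.IsAtom A ∧ A = B)
  ∨ (∃ D A' D' B', A = .app D A' ∧ B = .app D' B' ∧ R D D' ∧ R A' B')
  ∨ (∃ A1 A2 B1 B2, A = .arrow A1 A2 ∧ B = .arrow B1 B2 ∧ R B1 A1 ∧ R A2 B2)
  ∨ (∃ b v A', A = .mu b v A' ∧ R (MuTy.subst b v A A') B)
  ∨ (¬ A.IsMu ∧ ∃ b w B', B = .mu b w B' ∧ R A (MuTy.subst b w B B'))
  ∨ (A.IsUnion ∧ ¬ B.IsMu ∧ ∀ A' ∈ A.comps, R A' B)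
  ∨ (¬ A.IsUnion ∧ ¬ A.IsMu ∧ B.IsUnion ∧ ∃ B' ∈ B.comps, R A B')

/-- The generating function `Φ≤⃗μ`. -/
def PhiSubVec (X : Set (MuTy × MuTy)) : Set (MuTy × MuTy) :=
  {p | SubVecStep (fun a b => (a, b) ∈ X) p.1 p.2}

/-- `A ≤⃗μ B`: the greatest fixed point of `Φ≤⃗μ`. -/
def SubVec (A B : MuTy) : Prop :=
  ∃ R : MuTy → MuTy → Prop, (∀ x y, R x y → SubVecStep R x y) ∧ R A B

/- ## Possibly infinite trees 𝔗 -/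

inductive Leaf : Type
  | var : Bool → ℕ → Leaf
  | const : ℕ → Leaf
  | circ : Leaf
deriving DecidableEq

inductive TSym : Type
  | leaf : Leaf → TSym
  | app : TSym
  | arrow : TSym
  | union : TSym
deriving DecidableEq

/-- Raw (partial) trees: a labelling of binary positions. -/
abbrev PTree := List Bool → Option TSym

def childT (t : PTree) (i : Bool) : PTree := fun π => t (i :: π)

def subtreeAt (t : PTree) (ρ : List Bool) : PTree := fun π => t (ρ ++ π)

def TSym.IsBinary : TSym → Prop
  | .leaf _ => False
  | _ => True

/-- The set 𝔗 of regular possibly infinite trees with no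
    infinite branch consisting solely of ⊕-nodes. -/
structure ITree where
  label : PTree
  root_isSome : (label []).isSome
  child_iff : ∀ (π : List Bool) (i : Bool),
      (label (π ++ [i])).isSome ↔ ∃ s, label π = some s ∧ s.IsBinary
  regular : {u : PTree | ∃ π : List Bool, (label π).isSome ∧ u = subtreeAt label π}.Finite
  noUnionBranch : ¬ ∃ (π : List Bool) (g : ℕ → Bool),
      ∀ n : ℕ, label (π ++ (List.range n).map g) = some TSym.union

/- ## Truncation ⌊·⌋k -/

def truncAux : List Bool → ℕ → PTree → Option TSym
  | [], 0, _ => some (.leaf .circ)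
  | [], _ + 1, t => t []
  | _ :: _, 0, _ => none
  | i :: π, k + 1, t =>
      match t [] with
      | some .union => truncAux π (k + 1) (childT t i)
      | some .app => truncAux π k (childT t i)
      | some .arrow => truncAux π k (childT t i)
      | _ => none

/-- The truncation of a tree at depth `k`. -/
def trunc (k : ℕ) (t : PTree) : PTree := fun π => truncAux π k t

/- ## The infinite unfolding ⟦·⟧ of a μ-type -/

def muDepth : MuTy → ℕ
  | .mu _ _ A => muDepth A + 1
  | _ => 0

def headUnfold : ℕ → MuTy → MuTy
  | 0, A => A
  | n + 1, .mu b v A => headUnfold n (MuTy.subst b v (.mu b v A) A)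
  | _ + 1, A => A

/-- Unfold the head μ-binders away (total; fully unfolds contractive types). -/
def hnf (A : MuTy) : MuTy := headUnfold (muDepth A) A

def unfoldLabel : List Bool → MuTy → Option TSym
  | [], A =>
      match hnf A with
      | .var b v => some (.leaf (.var b v))
      | .const c => some (.leaf (.const c))
      | .app _ _ => some .app
      | .arrow _ _ => some .arrow
      | .union _ _ => some .union
      | .mu _ _ _ => none
  | i :: π, A =>
      match hnf A with
      | .app B C => unfoldLabel π (if i then C else B)
      | .arrow B C => unfoldLabel π (if i then C else B)
      | .union B C => unfoldLabel π (if i then C else B)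
      | _ => none

/-- `⟦A⟧`, the complete unfolding of a μ-type into a tree. -/
def treeOf (A : MuTy) : PTree := fun π => unfoldLabel π A

/- ## Maximal-union components of a tree -/

/-- `ρ` reaches, through ⊕-nodes only, a non-⊕ node of `t`:
    the components of the maximal union decomposition of `t`. -/
def IsCompPath (t : PTree) (ρ : List Bool) : Prop :=
  (∀ ρ' : List Bool, ρ' <+: ρ → ρ' ≠ ρ → t ρ' = some TSym.union) ∧
  (t ρ).isSome ∧ t ρ ≠ some TSym.union

def compPaths (t : PTree) : Set (List Bool) := {ρ | IsCompPath t ρ}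

/- ## Coinductive equality ≈T and subtyping ≤T on trees -/

def EqTStep (R : PTree → PTree → Prop) (A B : PTree) : Prop :=
  (∃ a, A [] = some (.leaf a) ∧ B [] = some (.leaf a))
  ∨ (A [] = some .app ∧ B [] = some .app ∧
      R (childT A false) (childT B false) ∧ R (childT A true) (childT B true))
  ∨ (A [] = some .arrow ∧ B [] = some .arrow ∧
      R (childT A false) (childT B false) ∧ R (childT A true) (childT B true))
  ∨ ((A [] = some .union ∨ B [] = some .union) ∧
      (∀ ρ ∈ compPaths A, ∃ ρ' ∈ compPaths B, R (subtreeAt A ρ) (subtreeAt B ρ')) ∧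
      (∀ ρ' ∈ compPaths B, ∃ ρ ∈ compPaths A, R (subtreeAt A ρ) (subtreeAt B ρ')))

/-- `≈T`, as the greatest fixed point of its generating function. -/
def EqT (A B : PTree) : Prop :=
  ∃ R : PTree → PTree → Prop, (∀ x y, R x y → EqTStep R x y) ∧ R A B

def SubTStep (R : PTree → PTree → Prop) (A B : PTree) : Prop :=
  (∃ a, A [] = some (.leaf a) ∧ B [] = some (.leaf a))
  ∨ (A [] = some .app ∧ B [] = some .app ∧
      R (childT A false) (childT B false) ∧ R (childT A true) (childT B true))
  ∨ (A [] = some .arrow ∧ B [] = some .arrow ∧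
      R (childT B false) (childT A false) ∧ R (childT A true) (childT B true))
  ∨ (A [] = some .union ∧ B [] ≠ some .union ∧
      ∀ ρ ∈ compPaths A, R (subtreeAt A ρ) B)
  ∨ (A [] ≠ some .union ∧ B [] = some .union ∧
      ∃ ρ' ∈ compPaths B, R A (subtreeAt B ρ'))
  ∨ (A [] = some .union ∧ B [] = some .union ∧
      ∀ ρ ∈ compPaths A, ∃ ρ' ∈ compPaths B, R (subtreeAt A ρ) (subtreeAt B ρ'))

/-- `≤T`, as the greatest fixed point of its generating function. -/
def SubT (A B : PTree) : Prop :=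
  ∃ R : PTree → PTree → Prop, (∀ x y, R x y → SubTStep R x y) ∧ R A B

/- ## Multi-hole μ⊕-contexts -/

inductive MuCtx : Type
  | hole : MuCtx
  | mu : Bool → ℕ → MuCtx → MuCtx
  | union : MuCtx → MuCtx → MuCtx

namespace MuCtx

def holes : MuCtx → ℕ
  | hole => 1
  | mu _ _ C => C.holes
  | union C D => C.holes + D.holes

def fill : MuCtx → List MuTy → MuTy
  | hole, As => As.headD (.const 0)
  | mu b v C, As => .mu b v (C.fill As)
  | union C D, As => .union (C.fill (As.take C.holes)) (D.fill (As.drop C.holes))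

/-- Positions of the holes, in left-to-right order. -/
def holePos : MuCtx → List (List Bool)
  | hole => [[]]
  | mu _ _ C => C.holePos.map (fun π => false :: π)
  | union C D => C.holePos.map (fun π => false :: π) ++ D.holePos.map (fun π => true :: π)

/-- Projection of the hole at position `π` of `𝖠[A⃗]`. -/
def proj : MuCtx → List MuTy → List Bool → Option MuTy
  | hole, As, [] => As.head?
  | mu b v C, As, false :: π =>
      (proj C As π).map (MuTy.subst b v (.mu b v (C.fill As)))
  | union C _D, As, false :: π => proj C (As.take C.holes) π
  | union C D, As, true :: π => proj D (As.drop C.holes) π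
  | _, _, _ => none

/-- Erase all μ-binders. -/
def erase : MuCtx → MuCtx
  | hole => hole
  | mu _ _ C => C.erase
  | union C D => .union C.erase D.erase

/-- ⊕-contexts (no μ-binders). -/
def IsUnionCtx : MuCtx → Prop
  | hole => True
  | mu _ _ _ => False
  | union C D => C.IsUnionCtx ∧ D.IsUnionCtx

/-- Filling a (μ-erased) context with trees. -/
def fillT : MuCtx → List PTree → List Bool → Option TSym
  | hole, ts, π => (ts.headD (fun _ => none)) π
  | mu _ _ C, ts, π => fillT C ts π
  | union _ _, _, [] => some TSym.union
  | union C _D, ts, false :: π => fillT C (ts.take C.holes) π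
  | union C D, ts, true :: π => fillT D (ts.drop C.holes) π

end MuCtx

/- ## n-ary-union trees 𝔗ⁿ -/

inductive NSym : Type
  | leaf : Leaf → NSym
  | app : NSym
  | arrow : NSym
  | union : ℕ → NSym

abbrev PTreeN := List ℕ → Option NSym

def childN (t : PTreeN) (j : ℕ) : PTreeN := fun π => t (j :: π)

def IsUnionRootN (t : PTreeN) : Prop := ∃ n, t [] = some (.union n)

/-- A key realising the left-to-right (lexicographic) order of prefix-free
    sets of positions. -/
def pathKey : List Bool → ℚ
  | [] => 0
  | b :: ρ => (if b then 1 else 0) + pathKey ρ / 2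

/-- `ρ` is the `j`-th (in left-to-right order, starting from 0) component path of `t`. -/
def IsNthComp (t : PTree) (j : ℕ) (ρ : List Bool) : Prop :=
  IsCompPath t ρ ∧ {ρ' | IsCompPath t ρ' ∧ pathKey ρ' < pathKey ρ}.ncard = j

-- The translation ⟨·⟩ : 𝔗 → 𝔗ⁿ flattening maximal unions into n-ary unions.
open Classical in
noncomputable def transLabel : List ℕ → PTree → Option NSym
  | [], t =>
      match t [] with
      | some (.leaf a) => some (.leaf a)
      | some .app => some NSym.app
      | some .arrow => some NSym.arrow
      | some .union => some (.union (compPaths t).ncard)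
      | none => none
  | j :: π, t =>
      match t [] with
      | some .union =>
          if h : ∃ ρ, IsNthComp t j ρ then transLabel π (subtreeAt t h.choose)
          else none
      | some .app => if j < 2 then transLabel π (childT t (j == 1)) else none
      | some .arrow => if j < 2 then transLabel π (childT t (j == 1)) else none
      | _ => none

noncomputable def transN (t : PTree) : PTreeN := fun π => transLabel π t

/- ## Subtyping and equivalence up-to a relation ℛ on 𝔗ⁿ -/

def NSubStep (RR S : PTreeN → PTreeN → Prop) (A B : PTreeN) : Prop :=
  let P := fun x y => S x y ∨ RR x y
  (∃ a, A [] = some (.leaf a) ∧ B [] = some (.leaf a))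
  ∨ (A [] = some .app ∧ B [] = some .app ∧
      P (childN A 0) (childN B 0) ∧ P (childN A 1) (childN B 1))
  ∨ (A [] = some .arrow ∧ B [] = some .arrow ∧
      P (childN B 0) (childN A 0) ∧ P (childN A 1) (childN B 1))
  ∨ (∃ n m, A [] = some (.union n) ∧ B [] = some (.union m) ∧
      (∀ i < n, ¬ IsUnionRootN (childN A i)) ∧ (∀ j < m, ¬ IsUnionRootN (childN B j)) ∧
      ∃ f : ℕ → ℕ, ∀ i < n, f i < m ∧ P (childN A i) (childN B (f i)))
  ∨ (∃ n, A [] = some (.union n) ∧ ¬ IsUnionRootN B ∧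
      (∀ i < n, ¬ IsUnionRootN (childN A i)) ∧ ∀ i < n, P (childN A i) B)
  ∨ (∃ m, B [] = some (.union m) ∧ ¬ IsUnionRootN A ∧
      (∀ j < m, ¬ IsUnionRootN (childN B j)) ∧ ∃ k < m, P A (childN B k))

/-- The subtyping relation up-to `RR` on 𝔗ⁿ. -/
def SubN (RR : PTreeN → PTreeN → Prop) (A B : PTreeN) : Prop :=
  ∃ S : PTreeN → PTreeN → Prop, (∀ x y, S x y → NSubStep RR S x y) ∧ S A B

def NEqStep (RR S : PTreeN → PTreeN → Prop) (A B : PTreeN) : Prop :=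
  let P := fun x y => S x y ∨ RR x y
  (∃ a, A [] = some (.leaf a) ∧ B [] = some (.leaf a))
  ∨ (A [] = some .app ∧ B [] = some .app ∧
      P (childN A 0) (childN B 0) ∧ P (childN A 1) (childN B 1))
  ∨ (A [] = some .arrow ∧ B [] = some .arrow ∧
      P (childN A 0) (childN B 0) ∧ P (childN A 1) (childN B 1))
  ∨ (∃ n m, A [] = some (.union n) ∧ B [] = some (.union m) ∧
      (∀ i < n, ¬ IsUnionRootN (childN A i)) ∧ (∀ j < m, ¬ IsUnionRootN (childN B j)) ∧
      (∃ f : ℕ → ℕ, ∀ i < n, f i < m ∧ P (childN A i) (childN B (f i))) ∧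
      (∃ g : ℕ → ℕ, ∀ j < m, g j < n ∧ P (childN A (g j)) (childN B j)))
  ∨ (∃ n, A [] = some (.union n) ∧ ¬ IsUnionRootN B ∧
      (∀ i < n, ¬ IsUnionRootN (childN A i)) ∧ ∀ i < n, P (childN A i) B)
  ∨ (∃ m, B [] = some (.union m) ∧ ¬ IsUnionRootN A ∧
      (∀ j < m, ¬ IsUnionRootN (childN B j)) ∧ ∀ j < m, P A (childN B j))

/-- The equivalence relation up-to `RR` on 𝔗ⁿ. -/
def EqN (RR : PTreeN → PTreeN → Prop) (A B : PTreeN) : Prop :=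
  ∃ S : PTreeN → PTreeN → Prop, (∀ x y, S x y → NEqStep RR S x y) ∧ S A B

/- ## CAP: patterns, terms, matching, reduction, typing -/

inductive Pat : Type
  | matchv : ℕ → Pat
  | const : ℕ → Pat
  | comp : Pat → Pat → Pat

/-- Matchables of a pattern. -/
def Pat.mv : Pat → Set ℕ
  | .matchv x => {x}
  | .const _ => ∅
  | .comp p q => p.mv ∪ q.mv

/-- Linear patterns. -/
def Pat.Linear : Pat → Prop
  | .matchv _ => True
  | .const _ => True
  | .comp p q => p.Linear ∧ q.Linear ∧ ∀ x ∈ p.mv, x ∉ q.mv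

/-- Typing contexts (for terms and for matchables of patterns). -/
abbrev TyCtx := ℕ → Option MuTy

inductive Tm : Type
  | var : ℕ → Tm
  | const : ℕ → Tm
  | app : Tm → Tm → Tm
  | abs : List (Pat × TyCtx × Tm) → Tm

/-- Data structures. -/
def isDataB : Tm → Bool
  | .const _ => true
  | .app d _ => isDataB d
  | _ => false

/-- Matchable forms: data structures and abstractions. -/
def isMatchableB : Tm → Bool
  | .abs _ => true
  | t => isDataB t

/-- Outcome of matching. -/
inductive MOut : Type
  | subst : (ℕ → Option Tm) → MOut
  | fail : MOut
  | wait : MOut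

/-- Disjoint union of matching outcomes. -/
def MOut.join : MOut → MOut → MOut
  | .fail, _ => .fail
  | _, .fail => .fail
  | .wait, _ => .wait
  | _, .wait => .wait
  | .subst σ₁, .subst σ₂ => .subst (fun x => (σ₁ x).orElse (fun _ => σ₂ x))

/-- The matching operation `p ⋗ u`. -/
def pmatch : Pat → Tm → MOut
  | .matchv x, u => .subst (fun y => if y = x then some u else none)
  | .const c, .const c' => if c = c' then .subst (fun _ => none) else .fail
  | .comp p q, .app u v =>
      if isMatchableB (.app u v) then (pmatch p u).join (pmatch q v) else .wait
  | _, u => if isMatchableB u then .fail else .wait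

-- Applying a substitution to a term.
mutual
  def applySubst (σ : ℕ → Option Tm) : Tm → Tm
    | .var x => (σ x).getD (.var x)
    | .const c => .const c
    | .app t u => .app (applySubst σ t) (applySubst σ u)
    | .abs bs => .abs (applySubstBs σ bs)
  def applySubstBs (σ : ℕ → Option Tm) : List (Pat × TyCtx × Tm) → List (Pat × TyCtx × Tm)
    | [] => []
    | (p, θ, s) :: bs => (p, θ, applySubst σ s) :: applySubstBs σ bs
end

/-- Reduction, the context closure of the β-rule of CAP. -/
inductive Step : Tm → Tm → Prop
  | beta (bs : List (Pat × TyCtx × Tm)) (u : Tm) (j : ℕ) (hj : j < bs.length)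
      (σ : ℕ → Option Tm) :
      (∀ i (hi : i < bs.length), i < j → pmatch (bs.get ⟨i, hi⟩).1 u = .fail) →
      pmatch (bs.get ⟨j, hj⟩).1 u = .subst σ →
      Step (.app (.abs bs) u) (applySubst σ (bs.get ⟨j, hj⟩).2.2)
  | appL {t t' : Tm} (u : Tm) : Step t t' → Step (.app t u) (.app t' u)
  | appR (t : Tm) {u u' : Tm} : Step u u' → Step (.app t u) (.app t u')
  | abs (l r : List (Pat × TyCtx × Tm)) (p : Pat) (θ : TyCtx) {s s' : Tm} :
      Step s s' → Step (.abs (l ++ (p, θ, s) :: r)) (.abs (l ++ (p, θ, s') :: r))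

/-- All patterns occurring in a term are linear. -/
inductive TmWF : Tm → Prop
  | var (x : ℕ) : TmWF (.var x)
  | const (c : ℕ) : TmWF (.const c)
  | app {t u : Tm} : TmWF t → TmWF u → TmWF (.app t u)
  | abs {bs : List (Pat × TyCtx × Tm)} :
      (∀ b ∈ bs, b.1.Linear) → (∀ b ∈ bs, TmWF b.2.2) → TmWF (.abs bs)

-- Values.
mutual
  inductive Neut : Tm → Prop
    | var (x : ℕ) : Neut (.var x)
    | const (c : ℕ) : Neut (.const c)
    | app {t u : Tm} : Neut t → IsValue u → Neut (.app t u)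
  inductive IsValue : Tm → Prop
    | neut {t : Tm} : Neut t → IsValue t
    | abs (bs : List (Pat × TyCtx × Tm)) : IsValue (.abs bs)
end

/- ## Pattern typing and compatibility -/

inductive PatTy : TyCtx → Pat → MuTy → Prop
  | matchv {θ : TyCtx} {x : ℕ} {A : MuTy} : θ x = some A → PatTy θ (.matchv x) A
  | const (θ : TyCtx) (c : ℕ) : PatTy θ (.const c) (.const c)
  | comp {θ : TyCtx} {p q : Pat} {D A : MuTy} :
      PatTy θ p D → MuTy.IsData D → PatTy θ q A → PatTy θ (.comp p q) (.app D A)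

/-- Symbols admitted at a position of a μ-type. -/
inductive PSym : Type
  | var : Bool → ℕ → PSym
  | const : ℕ → PSym
  | arrow : PSym
  | app : PSym

/-- `Admits A π s`: the symbol `s` belongs to `A@π`. -/
inductive Admits : MuTy → List Bool → PSym → Prop
  | var (b : Bool) (v : ℕ) : Admits (.var b v) [] (.var b v)
  | const (c : ℕ) : Admits (.const c) [] (.const c)
  | arrowE (A B : MuTy) : Admits (.arrow A B) [] .arrow
  | appE (A B : MuTy) : Admits (.app A B) [] .app
  | arrow1 {A : MuTy} {π : List Bool} {s : PSym} (B : MuTy) :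
      Admits A π s → Admits (.arrow A B) (false :: π) s
  | arrow2 (A : MuTy) {B : MuTy} {π : List Bool} {s : PSym} :
      Admits B π s → Admits (.arrow A B) (true :: π) s
  | app1 {A : MuTy} {π : List Bool} {s : PSym} (B : MuTy) :
      Admits A π s → Admits (.app A B) (false :: π) s
  | app2 (A : MuTy) {B : MuTy} {π : List Bool} {s : PSym} :
      Admits B π s → Admits (.app A B) (true :: π) s
  | unionL {A : MuTy} {π : List Bool} {s : PSym} (B : MuTy) :
      Admits A π s → Admits (.union A B) π s
  | unionR (A : MuTy) {B : MuTy} {π : List Bool} {s : PSym} :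
      Admits B π s → Admits (.union A B) π s
  | mu {b : Bool} {v : ℕ} {A : MuTy} {π : List Bool} {s : PSym} :
      Admits (MuTy.subst b v (.mu b v A) A) π s → Admits (.mu b v A) π s

/-- Subpattern at a position. -/
def Pat.at? : Pat → List Bool → Option Pat
  | p, [] => some p
  | .comp p q, i :: π => if i then q.at? π else p.at? π
  | _, _ :: _ => none

/-- Applying a (pattern) substitution to a pattern. -/
def psubst (σ : ℕ → Option Pat) : Pat → Pat
  | .matchv x => (σ x).getD (.matchv x)
  | .const c => .const c
  | .comp p q => .comp (psubst σ p) (psubst σ q)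

/-- `p` subsumes `q`. -/
def Subsumes (p q : Pat) : Prop := ∃ σ, psubst σ p = q

def CommonPos (p q : Pat) (π : List Bool) : Prop :=
  (p.at? π).isSome ∧ (q.at? π).isSome

/-- Mismatching positions between two patterns. -/
def CPos (p q : Pat) (π : List Bool) : Prop :=
  CommonPos p q π ∧ (∀ π' : List Bool, π' ≠ [] → ¬ CommonPos p q (π ++ π')) ∧
  ∃ p' q', p.at? π = some p' ∧ q.at? π = some q' ∧ ¬ Subsumes p' q'

/-- Compatibility of `⟨θ ⊳ p : A⟩` with `⟨θ' ⊳ q : B⟩`. -/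
def Compat (p : Pat) (A : MuTy) (q : Pat) (B : MuTy) : Prop :=
  (∀ π, CPos p q π → ∃ s, Admits A π s ∧ Admits B π s) → Sub B A

def ctxDom (θ : TyCtx) : Set ℕ := {x | (θ x).isSome}

def ctxExt (Γ θ : TyCtx) : TyCtx := fun x => (θ x).orElse (fun _ => Γ x)

/-- `⊕` of a nonempty list of types. -/
def bigUnion : List MuTy → MuTy
  | [] => .const 0
  | [A] => A
  | A :: As => .union A (bigUnion As)

/- ## Term typing -/

inductive Ty : TyCtx → Tm → MuTy → Prop
  | var {Γ : TyCtx} {x : ℕ} {A : MuTy} : Γ x = some A → Ty Γ (.var x) A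
  | const (Γ : TyCtx) (c : ℕ) : Ty Γ (.const c) (.const c)
  | comp {Γ : TyCtx} {r u : Tm} {D A : MuTy} :
      Ty Γ r D → MuTy.IsData D → Ty Γ u A → Ty Γ (.app r u) (.app D A)
  | abs {Γ : TyCtx} (l : List ((Pat × TyCtx × Tm) × MuTy)) {B : MuTy} :
      l ≠ [] →
      (∀ i j (hi : i < l.length) (hj : j < l.length), i < j →
        Compat (l.get ⟨i, hi⟩).1.1 (l.get ⟨i, hi⟩).2
               (l.get ⟨j, hj⟩).1.1 (l.get ⟨j, hj⟩).2) →
      (∀ b ∈ l, PatTy b.1.2.1 b.1.1 b.2) →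
      (∀ b ∈ l, ctxDom b.1.2.1 = Pat.mv b.1.1) →
      (∀ b ∈ l, Ty (ctxExt Γ b.1.2.1) b.1.2.2 B) →
      Ty Γ (.abs (l.map Prod.fst)) (.arrow (bigUnion (l.map Prod.snd)) B)
  | app {Γ : TyCtx} {r u : Tm} {B : MuTy} (As : List MuTy) (k : ℕ) (hk : k < As.length) :
      Ty Γ r (.arrow (bigUnion As) B) →
      Ty Γ u (As.get ⟨k, hk⟩) →
      Ty Γ (.app r u) B
  | sub {Γ : TyCtx} {s : Tm} {A A' : MuTy} : Ty Γ s A → Sub A A' → Ty Γ s A'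

/- ## Syntax-directed term typing -/

inductive TySD : TyCtx → Tm → MuTy → Prop
  | var {Γ : TyCtx} {x : ℕ} {A : MuTy} : Γ x = some A → TySD Γ (.var x) A
  | const (Γ : TyCtx) (c : ℕ) : TySD Γ (.const c) (.const c)
  | comp {Γ : TyCtx} {r u : Tm} {D A : MuTy} :
      TySD Γ r D → MuTy.IsData D → TySD Γ u A → TySD Γ (.app r u) (.app D A)
  | abs {Γ : TyCtx} (l : List ((Pat × TyCtx × Tm) × MuTy × MuTy)) :
      l ≠ [] →
      (∀ i j (hi : i < l.length) (hj : j < l.length), i < j →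
        Compat (l.get ⟨i, hi⟩).1.1 (l.get ⟨i, hi⟩).2.1
               (l.get ⟨j, hj⟩).1.1 (l.get ⟨j, hj⟩).2.1) →
      (∀ b ∈ l, PatTy b.1.2.1 b.1.1 b.2.1) →
      (∀ b ∈ l, ctxDom b.1.2.1 = Pat.mv b.1.1) →
      (∀ b ∈ l, TySD (ctxExt Γ b.1.2.1) b.1.2.2 b.2.2) →
      TySD Γ (.abs (l.map Prod.fst))
        (.arrow (bigUnion (l.map (fun b => b.2.1))) (bigUnion (l.map (fun b => b.2.2))))
  | app {Γ : TyCtx} {r u : Tm} {A C : MuTy} (ABs : List (MuTy × MuTy)) :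
      ABs ≠ [] →
      TySD Γ r A →
      EqMu A (bigUnion (ABs.map (fun q => .arrow q.1 q.2))) →
      (∀ q ∈ ABs, ¬ (q.1).IsUnion) →
      TySD Γ u C →
      (∀ q ∈ ABs, Sub C q.1) →
      TySD Γ (.app r u) (bigUnion (ABs.map Prod.snd))

section SubTSubN

open Classical

/- ### pathKey basics -/

lemma pathKey_nonneg : ∀ ρ : List Bool, 0 ≤ pathKey ρ
  | [] => le_refl 0
  | b :: ρ => by
      have := pathKey_nonneg ρ
      cases b <;> simp [pathKey] <;> linarith

lemma pathKey_lt_two : ∀ ρ : List Bool, pathKey ρ < 2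
  | [] => by norm_num [pathKey]
  | b :: ρ => by
      have h1 := pathKey_lt_two ρ
      have h2 := pathKey_nonneg ρ
      cases b <;> simp [pathKey] <;> linarith

lemma pathKey_ne_of_incomp :
    ∀ ρ ρ' : List Bool, ¬ ρ <+: ρ' → ¬ ρ' <+: ρ → pathKey ρ ≠ pathKey ρ'
  | [], ρ', h, _ => absurd List.nil_prefix h
  | _ :: _, [], _, h' => absurd List.nil_prefix h'
  | b :: ρ, b' :: ρ', h, h' => by
      by_cases hb : b = b'
      · subst hb
        have h2 : ¬ ρ <+: ρ' := fun hp => h (by simpa [List.cons_prefix_cons] using hp)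
        have h2' : ¬ ρ' <+: ρ := fun hp => h' (by simpa [List.cons_prefix_cons] using hp)
        have hne := pathKey_ne_of_incomp ρ ρ' h2 h2'
        cases b <;> simp [pathKey] <;> intro e <;> exact hne (by linarith)
      · have k1 := pathKey_nonneg ρ
        have k2 := pathKey_lt_two ρ
        have k1' := pathKey_nonneg ρ'
        have k2' := pathKey_lt_two ρ'
        cases b <;> cases b' <;> simp_all [pathKey] <;> intro e <;> linarith

/- ### König's lemma for prefix-closed sets of binary strings -/

lemma koenig (U : Set (List Bool)) (hpc : ∀ π ∈ U, ∀ π', π' <+: π → π' ∈ U)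
    (hU : U.Infinite) : ∃ g : ℕ → Bool, ∀ n, (List.range n).map g ∈ U := by
  classical
  set Ext : List Bool → Set (List Bool) := fun p => {π ∈ U | p <+: π} with hExt
  have hsplit : ∀ p, (Ext p).Infinite →
      (Ext (p ++ [false])).Infinite ∨ (Ext (p ++ [true])).Infinite := by
    intro p hp
    by_contra hcon
    push_neg at hcon
    obtain ⟨hf, ht⟩ := hcon
    have hsub : Ext p ⊆ Ext (p ++ [false]) ∪ Ext (p ++ [true]) ∪ {p} := by
      rintro π ⟨hπU, s, rfl⟩
      cases s with
      | nil => right; simp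
      | cons b s =>
          left
          cases b
          · left; exact ⟨hπU, s, by simp⟩
          · right; exact ⟨hπU, s, by simp⟩
    exact hp (((hf.union ht).union (Set.finite_singleton p)).subset hsub)
  let pickb : List Bool → Bool := fun p => if (Ext (p ++ [false])).Infinite then false else true
  have hpick : ∀ p, (Ext p).Infinite → (Ext (p ++ [pickb p])).Infinite := by
    intro p hp
    by_cases hf : (Ext (p ++ [false])).Infinite
    · simpa [pickb, hf] using hf
    · have := (hsplit p hp).resolve_left hf
      simpa [pickb, hf] using this
  let F : ℕ → List Bool := fun n => Nat.rec [] (fun _ p => p ++ [pickb p]) n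
  let g : ℕ → Bool := fun n => pickb (F n)
  have hFg : ∀ n, F n = (List.range n).map g := by
    intro n
    induction n with
    | zero => simp [F]
    | succ n ih =>
        have : F (n + 1) = F n ++ [pickb (F n)] := rfl
        rw [this, List.range_succ, List.map_append, ← ih]
        rfl
  have hInf : ∀ n, (Ext (F n)).Infinite := by
    intro n
    induction n with
    | zero =>
        have : Ext [] = U := by
          ext π; simp [hExt, List.nil_prefix]
        show (Ext []).Infinite
        rw [this]; exact hU
    | succ n ih => exact hpick (F n) ih
  refine ⟨g, fun n => ?_⟩
  rw [← hFg]
  obtain ⟨π, hπ⟩ := (hInf n).nonempty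
  exact hpc π hπ.1 _ hπ.2

/- ### Well-behaved trees -/

def GoodT (t : PTree) : Prop :=
  ∀ π : List Bool, ¬ ∃ g : ℕ → Bool, ∀ n, t (π ++ (List.range n).map g) = some TSym.union

lemma GoodT.subtree {t : PTree} (h : GoodT t) (ρ : List Bool) : GoodT (subtreeAt t ρ) := by
  intro π hπ
  obtain ⟨g, hg⟩ := hπ
  refine h (ρ ++ π) ⟨g, fun n => ?_⟩
  have := hg n
  simpa [subtreeAt, List.append_assoc] using this

lemma childT_eq_subtreeAt (t : PTree) (b : Bool) : childT t b = subtreeAt t [b] := rfl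

lemma GoodT.child {t : PTree} (h : GoodT t) (b : Bool) : GoodT (childT t b) := by
  rw [childT_eq_subtreeAt]; exact h.subtree [b]

lemma compPaths_finite {t : PTree} (h : GoodT t) : (compPaths t).Finite := by
  by_contra hinf
  rw [← Set.not_infinite, not_not] at hinf
  set U : Set (List Bool) :=
    {π | ∀ π' : List Bool, π' <+: π → π' ≠ π → t π' = some TSym.union} with hUdef
  have hsub : compPaths t ⊆ U := fun ρ hρ => hρ.1
  have hUinf : U.Infinite := hinf.mono hsub
  have hpc : ∀ π ∈ U, ∀ π', π' <+: π → π' ∈ U := by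
    intro π hπ π' hπ' π'' h1 h2
    refine hπ π'' (h1.trans hπ') (fun e => h2 ?_)
    subst e
    exact (h1.eq_of_length (le_antisymm h1.length_le hπ'.length_le)).symm ▸ rfl
  obtain ⟨g, hg⟩ := koenig U hpc hUinf
  refine h [] ⟨g, fun n => ?_⟩
  have hmem := hg (n + 1)
  have hpre : (List.range n).map g <+: (List.range (n + 1)).map g := by
    rw [List.range_succ, List.map_append]
    exact ⟨_, rfl⟩
  have hne : (List.range n).map g ≠ (List.range (n + 1)).map g := by
    intro e
    have := congrArg List.length e
    simp at this
  simpa using hmem _ hpre hne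

lemma compPaths_injOn_key (t : PTree) : Set.InjOn pathKey (compPaths t) := by
  intro ρ h ρ' h' hk
  by_contra hne
  have hnp : ¬ ρ <+: ρ' := fun hp => h.2.2 (h'.1 ρ hp hne)
  have hnp' : ¬ ρ' <+: ρ := fun hp => h'.2.2 (h.1 ρ' hp (Ne.symm hne))
  exact pathKey_ne_of_incomp ρ ρ' hnp hnp' hk

/- ### Indexing elements of a finite set by the number of smaller keys -/

lemma index_exists {α : Type*} (S : Set α) (hS : S.Finite) (f : α → ℚ)
    (hinj : Set.InjOn f S) : ∀ j, j < S.ncard → ∃ ρ ∈ S, {x | x ∈ S ∧ f x < f ρ}.ncard = j := by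
  intro j
  induction j with
  | zero =>
      intro hj
      have hne : S.Nonempty := by
        rw [Set.nonempty_iff_ne_empty]
        intro e
        rw [e] at hj; simp at hj
      obtain ⟨ρ, hρ, hmin⟩ := Set.exists_min_image S f hS hne
      refine ⟨ρ, hρ, ?_⟩
      have he : {x | x ∈ S ∧ f x < f ρ} = ∅ := by
        ext x
        simp only [Set.mem_setOf_eq, Set.mem_empty_iff_false, iff_false, not_and]
        intro hx hlt
        exact absurd (hmin x hx) (not_le.2 hlt)
      rw [he]; simp
  | succ j ih =>
      intro hj
      obtain ⟨ρ, hρ, hcard⟩ := ih (by omega)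
      have hbelowfin : ∀ y : α, {x | x ∈ S ∧ f x < f y}.Finite :=
        fun y => hS.subset (fun x hx => hx.1)
      have hTfin : {x | x ∈ S ∧ f ρ < f x}.Finite := hS.subset (fun x hx => hx.1)
      have hTne : {x | x ∈ S ∧ f ρ < f x}.Nonempty := by
        by_contra hTe
        rw [Set.not_nonempty_iff_eq_empty] at hTe
        have hsubS : S ⊆ {x | x ∈ S ∧ f x < f ρ} ∪ {ρ} := by
          intro x hx
          rcases lt_trichotomy (f x) (f ρ) with hlt | heq | hgt
          · exact Or.inl ⟨hx, hlt⟩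
          · exact Or.inr (hinj hx hρ heq)
          · exact absurd (Set.mem_empty_iff_false x |>.1 (hTe ▸ ⟨hx, hgt⟩)) (fun h => h)
        have h1 := Set.ncard_le_ncard hsubS ((hbelowfin ρ).union (Set.finite_singleton ρ))
        have h2 := Set.ncard_union_le {x | x ∈ S ∧ f x < f ρ} {ρ}
        rw [hcard, Set.ncard_singleton] at h2
        omega
      obtain ⟨ρ', hρ'T, hmin⟩ := Set.exists_min_image _ f hTfin hTne
      refine ⟨ρ', hρ'T.1, ?_⟩
      have heq : {x | x ∈ S ∧ f x < f ρ'} = insert ρ {x | x ∈ S ∧ f x < f ρ} := by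
        ext x
        simp only [Set.mem_setOf_eq, Set.mem_insert_iff]
        constructor
        · rintro ⟨hx, hlt⟩
          rcases lt_trichotomy (f x) (f ρ) with h1 | h1 | h1
          · exact Or.inr ⟨hx, h1⟩
          · exact Or.inl (hinj hx hρ h1)
          · exact absurd (hmin x ⟨hx, h1⟩) (not_le.2 hlt)
        · rintro (rfl | ⟨hx, hlt⟩)
          · exact ⟨hρ, hρ'T.2⟩
          · exact ⟨hx, hlt.trans hρ'T.2⟩
      rw [heq, Set.ncard_insert_of_notMem (fun hc => lt_irrefl _ hc.2) (hbelowfin ρ), hcard]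

lemma index_inj {α : Type*} {S : Set α} (hS : S.Finite) {f : α → ℚ} {ρ ρ' : α}
    (hρ : ρ ∈ S) (hρ' : ρ' ∈ S)
    (h : {x | x ∈ S ∧ f x < f ρ}.ncard = {x | x ∈ S ∧ f x < f ρ'}.ncard) : f ρ = f ρ' := by
  by_contra hne
  wlog hlt : f ρ < f ρ' generalizing ρ ρ'
  · exact this hρ' hρ h.symm (Ne.symm hne) ((lt_or_gt_of_ne hne).resolve_left hlt)
  have hss : {x | x ∈ S ∧ f x < f ρ} ⊂ {x | x ∈ S ∧ f x < f ρ'} := by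
    constructor
    · exact fun x hx => ⟨hx.1, hx.2.trans hlt⟩
    · intro hc
      exact lt_irrefl _ (hc ⟨hρ, hlt⟩).2
  exact absurd h (Nat.ne_of_lt (Set.ncard_lt_ncard hss (hS.subset fun x hx => hx.1)))

lemma index_lt {α : Type*} {S : Set α} (hS : S.Finite) {f : α → ℚ} {ρ : α} (hρ : ρ ∈ S) :
    {x | x ∈ S ∧ f x < f ρ}.ncard < S.ncard := by
  refine Set.ncard_lt_ncard ⟨fun x hx => hx.1, fun hc => ?_⟩ hS
  exact lt_irrefl _ (hc hρ).2

/- ### nth component paths -/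

lemma isNthComp_unique {t : PTree} {j : ℕ} {ρ ρ' : List Bool} (h : GoodT t)
    (h1 : IsNthComp t j ρ) (h2 : IsNthComp t j ρ') : ρ = ρ' := by
  have hfin := compPaths_finite h
  have hkey : pathKey ρ = pathKey ρ' := by
    refine index_inj hfin h1.1 h2.1 ?_
    show {x | x ∈ compPaths t ∧ pathKey x < pathKey ρ}.ncard
        = {x | x ∈ compPaths t ∧ pathKey x < pathKey ρ'}.ncard
    have e1 : {x | x ∈ compPaths t ∧ pathKey x < pathKey ρ}
        = {ρ'' | IsCompPath t ρ'' ∧ pathKey ρ'' < pathKey ρ} := rfl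
    have e2 : {x | x ∈ compPaths t ∧ pathKey x < pathKey ρ'}
        = {ρ'' | IsCompPath t ρ'' ∧ pathKey ρ'' < pathKey ρ'} := rfl
    rw [e1, e2, h1.2, h2.2]
  exact compPaths_injOn_key t h1.1 h2.1 hkey

lemma isNthComp_exists {t : PTree} {j : ℕ} (h : GoodT t) (hj : j < (compPaths t).ncard) :
    ∃ ρ, IsNthComp t j ρ := by
  obtain ⟨ρ, hρ, hc⟩ := index_exists (compPaths t) (compPaths_finite h) pathKey
    (compPaths_injOn_key t) j hj
  exact ⟨ρ, hρ, hc⟩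

lemma isNthComp_of_mem {t : PTree} {ρ : List Bool} (hρ : ρ ∈ compPaths t) :
    IsNthComp t ({ρ' | IsCompPath t ρ' ∧ pathKey ρ' < pathKey ρ}.ncard) ρ := ⟨hρ, rfl⟩

lemma nthIndex_lt {t : PTree} {ρ : List Bool} (h : GoodT t) (hρ : ρ ∈ compPaths t) :
    {ρ' | IsCompPath t ρ' ∧ pathKey ρ' < pathKey ρ}.ncard < (compPaths t).ncard :=
  index_lt (compPaths_finite h) hρ

end SubTSubN

section SubTSubN2

/- ### Translation commutation lemmas -/

lemma transN_nil_leaf {t : PTree} {a : Leaf} (h : t [] = some (.leaf a)) :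
    transN t [] = some (.leaf a) := by
  show transLabel [] t = _
  rw [transLabel, h]

lemma transN_nil_app {t : PTree} (h : t [] = some .app) :
    transN t [] = some NSym.app := by
  show transLabel [] t = _
  rw [transLabel, h]

lemma transN_nil_arrow {t : PTree} (h : t [] = some .arrow) :
    transN t [] = some NSym.arrow := by
  show transLabel [] t = _
  rw [transLabel, h]

lemma transN_nil_union {t : PTree} (h : t [] = some .union) :
    transN t [] = some (.union (compPaths t).ncard) := by
  show transLabel [] t = _
  rw [transLabel, h]

lemma isUnionRootN_transN {t : PTree} : IsUnionRootN (transN t) ↔ t [] = some TSym.union := by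
  constructor
  · rintro ⟨n, hn⟩
    change transLabel [] t = _ at hn
    rw [transLabel] at hn
    rcases ht : t [] with _ | s
    · rw [ht] at hn; simp at hn
    · cases s <;> rw [ht] at hn <;> simp_all
  · intro h
    exact ⟨_, transN_nil_union h⟩

lemma eq_leaf_of_transN {t : PTree} {a : Leaf} (h : transN t [] = some (.leaf a)) :
    t [] = some (.leaf a) := by
  change transLabel [] t = _ at h
  rw [transLabel] at h
  rcases ht : t [] with _ | s
  · rw [ht] at h; simp at h
  · cases s <;> rw [ht] at h <;> simp_all

lemma eq_app_of_transN {t : PTree} (h : transN t [] = some NSym.app) :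
    t [] = some TSym.app := by
  change transLabel [] t = _ at h
  rw [transLabel] at h
  rcases ht : t [] with _ | s
  · rw [ht] at h; simp at h
  · cases s <;> rw [ht] at h <;> simp_all

lemma eq_arrow_of_transN {t : PTree} (h : transN t [] = some NSym.arrow) :
    t [] = some TSym.arrow := by
  change transLabel [] t = _ at h
  rw [transLabel] at h
  rcases ht : t [] with _ | s
  · rw [ht] at h; simp at h
  · cases s <;> rw [ht] at h <;> simp_all

lemma eq_union_of_transN {t : PTree} {n : ℕ} (h : transN t [] = some (.union n)) :
    t [] = some TSym.union ∧ n = (compPaths t).ncard := by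
  change transLabel [] t = _ at h
  rw [transLabel] at h
  rcases ht : t [] with _ | s
  · rw [ht] at h; simp at h
  · cases s <;> rw [ht] at h <;> simp_all

lemma transN_child0_app {t : PTree} (h : t [] = some TSym.app) :
    childN (transN t) 0 = transN (childT t false) := by
  funext π
  show transLabel (0 :: π) t = transLabel π (childT t false)
  rw [transLabel, h]
  norm_num
  try rfl

lemma transN_child1_app {t : PTree} (h : t [] = some TSym.app) :
    childN (transN t) 1 = transN (childT t true) := by
  funext π
  show transLabel (1 :: π) t = transLabel π (childT t true)
  rw [transLabel, h]
  norm_num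
  try rfl

lemma transN_child0_arrow {t : PTree} (h : t [] = some TSym.arrow) :
    childN (transN t) 0 = transN (childT t false) := by
  funext π
  show transLabel (0 :: π) t = transLabel π (childT t false)
  rw [transLabel, h]
  norm_num
  try rfl

lemma transN_child1_arrow {t : PTree} (h : t [] = some TSym.arrow) :
    childN (transN t) 1 = transN (childT t true) := by
  funext π
  show transLabel (1 :: π) t = transLabel π (childT t true)
  rw [transLabel, h]
  norm_num
  try rfl

lemma transN_child_union {t : PTree} {j : ℕ} {ρ : List Bool} (hG : GoodT t)
    (h : t [] = some TSym.union) (hn : IsNthComp t j ρ) :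
    childN (transN t) j = transN (subtreeAt t ρ) := by
  funext π
  show transLabel (j :: π) t = transLabel π (subtreeAt t ρ)
  rw [transLabel, h]
  have hex : ∃ ρ', IsNthComp t j ρ' := ⟨ρ, hn⟩
  rw [dif_pos hex]
  rw [isNthComp_unique hG hex.choose_spec hn]

lemma not_isUnionRootN_comp {t : PTree} {ρ : List Bool} (hρ : IsCompPath t ρ) :
    ¬ IsUnionRootN (transN (subtreeAt t ρ)) := by
  rw [isUnionRootN_transN]
  have hst : subtreeAt t ρ [] = t ρ := by simp [subtreeAt]
  rw [hst]
  exact hρ.2.2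

end SubTSubN2

section SubTSubN3

lemma goodT_of_ITree (A : ITree) : GoodT A.label := by
  intro π hπ
  obtain ⟨g, hg⟩ := hπ
  exact A.noUnionBranch ⟨π, g, hg⟩

lemma subT_iff_subN_good {t u : PTree} (ht : GoodT t) (hu : GoodT u) :
    SubT t u ↔ SubN (fun _ _ => False) (transN t) (transN u) := by
  constructor
  · rintro ⟨R, hR, hRtu⟩
    refine ⟨fun X Y => ∃ t' u', GoodT t' ∧ GoodT u' ∧ R t' u' ∧ X = transN t' ∧ Y = transN u',
      ?_, t, u, ht, hu, hRtu, rfl, rfl⟩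
    rintro X Y ⟨t1, u1, ht1, hu1, hr, rfl, rfl⟩
    have hstep := hR t1 u1 hr
    unfold SubTStep at hstep
    simp only [NSubStep]
    rcases hstep with ⟨a, h1, h2⟩ | ⟨h1, h2, hc0, hc1⟩ | ⟨h1, h2, hc0, hc1⟩ |
      ⟨h1, h2, hall⟩ | ⟨h1, h2, ρ', hρ', hr'⟩ | ⟨h1, h2, hall⟩
    · exact Or.inl ⟨a, transN_nil_leaf h1, transN_nil_leaf h2⟩
    · refine Or.inr (Or.inl ⟨transN_nil_app h1, transN_nil_app h2, ?_, ?_⟩)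
      · exact Or.inl ⟨_, _, ht1.child false, hu1.child false, hc0,
          transN_child0_app h1, transN_child0_app h2⟩
      · exact Or.inl ⟨_, _, ht1.child true, hu1.child true, hc1,
          transN_child1_app h1, transN_child1_app h2⟩
    · refine Or.inr (Or.inr (Or.inl ⟨transN_nil_arrow h1, transN_nil_arrow h2, ?_, ?_⟩))
      · exact Or.inl ⟨_, _, hu1.child false, ht1.child false, hc0,
          transN_child0_arrow h2, transN_child0_arrow h1⟩
      · exact Or.inl ⟨_, _, ht1.child true, hu1.child true, hc1,
          transN_child1_arrow h1, transN_child1_arrow h2⟩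
    · refine Or.inr (Or.inr (Or.inr (Or.inr (Or.inl
        ⟨(compPaths t1).ncard, transN_nil_union h1, ?_, ?_, ?_⟩))))
      · rw [isUnionRootN_transN]; exact h2
      · intro i hi
        obtain ⟨ρ, hρ⟩ := isNthComp_exists ht1 hi
        rw [transN_child_union ht1 h1 hρ]
        exact not_isUnionRootN_comp hρ.1
      · intro i hi
        obtain ⟨ρ, hρ⟩ := isNthComp_exists ht1 hi
        rw [transN_child_union ht1 h1 hρ]
        exact Or.inl ⟨_, _, ht1.subtree ρ, hu1, hall ρ hρ.1, rfl, rfl⟩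
    · refine Or.inr (Or.inr (Or.inr (Or.inr (Or.inr
        ⟨(compPaths u1).ncard, transN_nil_union h2, ?_, ?_, ?_⟩))))
      · rw [isUnionRootN_transN]; exact h1
      · intro j hj
        obtain ⟨ρ, hρ⟩ := isNthComp_exists hu1 hj
        rw [transN_child_union hu1 h2 hρ]
        exact not_isUnionRootN_comp hρ.1
      · refine ⟨_, nthIndex_lt hu1 hρ', ?_⟩
        rw [transN_child_union hu1 h2 (isNthComp_of_mem hρ')]
        exact Or.inl ⟨_, _, ht1, hu1.subtree ρ', hr', rfl, rfl⟩
    · refine Or.inr (Or.inr (Or.inr (Or.inl ⟨(compPaths t1).ncard, (compPaths u1).ncard,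
        transN_nil_union h1, transN_nil_union h2, ?_, ?_, ?_⟩)))
      · intro i hi
        obtain ⟨ρ, hρ⟩ := isNthComp_exists ht1 hi
        rw [transN_child_union ht1 h1 hρ]
        exact not_isUnionRootN_comp hρ.1
      · intro j hj
        obtain ⟨ρ, hρ⟩ := isNthComp_exists hu1 hj
        rw [transN_child_union hu1 h2 hρ]
        exact not_isUnionRootN_comp hρ.1
      · have hcl : ∀ i, ∃ j, i < (compPaths t1).ncard →
            j < (compPaths u1).ncard ∧
            (∃ t' u', GoodT t' ∧ GoodT u' ∧ R t' u' ∧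
              childN (transN t1) i = transN t' ∧ childN (transN u1) j = transN u') := by
          intro i
          by_cases hi : i < (compPaths t1).ncard
          · obtain ⟨ρ, hρ⟩ := isNthComp_exists ht1 hi
            obtain ⟨ρ', hρ', hr'⟩ := hall ρ hρ.1
            exact ⟨_, fun _ => ⟨nthIndex_lt hu1 hρ',
              ⟨_, _, ht1.subtree ρ, hu1.subtree ρ', hr',
                transN_child_union ht1 h1 hρ,
                transN_child_union hu1 h2 (isNthComp_of_mem hρ')⟩⟩⟩
          · exact ⟨0, fun h => absurd h hi⟩
        choose f hf using hcl
        exact ⟨f, fun i hi => ⟨(hf i hi).1, Or.inl (hf i hi).2⟩⟩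
  · rintro ⟨S, hS, hStu⟩
    refine ⟨fun t' u' => GoodT t' ∧ GoodT u' ∧ S (transN t') (transN u'), ?_, ht, hu, hStu⟩
    rintro t1 u1 ⟨ht1, hu1, hs⟩
    have hstep := hS _ _ hs
    simp only [NSubStep] at hstep
    unfold SubTStep
    rcases hstep with ⟨a, h1, h2⟩ | ⟨h1, h2, hc0, hc1⟩ | ⟨h1, h2, hc0, hc1⟩ |
      ⟨n, m, h1, h2, hA, hB, f, hf⟩ | ⟨n, h1, h2, hA, hall⟩ | ⟨m, h1, h2, hB, k, hk, hP⟩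
    · exact Or.inl ⟨a, eq_leaf_of_transN h1, eq_leaf_of_transN h2⟩
    · have e1 := eq_app_of_transN h1
      have e2 := eq_app_of_transN h2
      refine Or.inr (Or.inl ⟨e1, e2, ?_, ?_⟩)
      · refine ⟨ht1.child false, hu1.child false, ?_⟩
        rw [← transN_child0_app e1, ← transN_child0_app e2]
        exact hc0.resolve_right id
      · refine ⟨ht1.child true, hu1.child true, ?_⟩
        rw [← transN_child1_app e1, ← transN_child1_app e2]
        exact hc1.resolve_right id
    · have e1 := eq_arrow_of_transN h1
      have e2 := eq_arrow_of_transN h2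
      refine Or.inr (Or.inr (Or.inl ⟨e1, e2, ?_, ?_⟩))
      · refine ⟨hu1.child false, ht1.child false, ?_⟩
        rw [← transN_child0_arrow e1, ← transN_child0_arrow e2]
        exact hc0.resolve_right id
      · refine ⟨ht1.child true, hu1.child true, ?_⟩
        rw [← transN_child1_arrow e1, ← transN_child1_arrow e2]
        exact hc1.resolve_right id
    · obtain ⟨e1, en⟩ := eq_union_of_transN h1
      obtain ⟨e2, em⟩ := eq_union_of_transN h2
      subst en; subst em
      refine Or.inr (Or.inr (Or.inr (Or.inr (Or.inr ⟨e1, e2, ?_⟩))))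
      intro ρ hρ
      have hidx := isNthComp_of_mem hρ
      have hlt := nthIndex_lt ht1 hρ
      obtain ⟨hfm, hfp⟩ := hf _ hlt
      obtain ⟨ρ', hρ'⟩ := isNthComp_exists hu1 hfm
      refine ⟨ρ', hρ'.1, ht1.subtree ρ, hu1.subtree ρ', ?_⟩
      rw [← transN_child_union ht1 e1 hidx, ← transN_child_union hu1 e2 hρ']
      exact hfp.resolve_right id
    · obtain ⟨e1, en⟩ := eq_union_of_transN h1
      subst en
      have e2 : u1 [] ≠ some TSym.union := fun hc => h2 (isUnionRootN_transN.2 hc)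
      refine Or.inr (Or.inr (Or.inr (Or.inl ⟨e1, e2, ?_⟩)))
      intro ρ hρ
      have hidx := isNthComp_of_mem hρ
      have hlt := nthIndex_lt ht1 hρ
      refine ⟨ht1.subtree ρ, hu1, ?_⟩
      rw [← transN_child_union ht1 e1 hidx]
      exact (hall _ hlt).resolve_right id
    · obtain ⟨e2, em⟩ := eq_union_of_transN h1
      subst em
      have e1 : t1 [] ≠ some TSym.union := fun hc => h2 (isUnionRootN_transN.2 hc)
      obtain ⟨ρ', hρ'⟩ := isNthComp_exists hu1 hk
      refine Or.inr (Or.inr (Or.inr (Or.inr (Or.inl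
        ⟨e1, e2, ρ', hρ'.1, ht1, hu1.subtree ρ', ?_⟩))))
      rw [← transN_child_union hu1 e2 hρ']
      exact hP.resolve_right id

end SubTSubN3

/- STATEMENT 16 -/

theorem subT_iff_subN (A B : ITree) :
    SubT A.label B.label ↔
      SubN (fun _ _ => False) (transN A.label) (transN B.label) :=
  subT_iff_subN_good (goodT_of_ITree A) (goodT_of_ITree B)

end CAPPaper
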